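/- Let π be the group with presentation ⟨a, b, t | t·a·t⁻¹ = a², a·b·a⁻¹ = b⁻¹, b³ = 1⟩. Then π is not virtually torsion-free: every subgroup of π of finite index contains a non-identity element of finite order. -/

import Mathlib

/-- The relators of the group `π = ⟨a, b, t | tat⁻¹ = a², aba⁻¹ = b⁻¹, b³ = 1⟩`, with the
three generators `a, b, t` encoded as `0, 1, 2 : Fin 3`: the words `t·a·t⁻¹·a⁻²`, `a·b·a⁻¹·b`
and `b³`. -/
def satelliteRels : Set (FreeGroup (Fin 3)) :=
  {FreeGroup.of 2 * FreeGroup.of 0 * (FreeGroup.of 2)⁻¹ * (FreeGroup.of 0 ^ 2)⁻¹,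
   FreeGroup.of 0 * FreeGroup.of 1 * (FreeGroup.of 0)⁻¹ * FreeGroup.of 1,
   FreeGroup.of 1 ^ 3}

/-! ## A concrete model group

`GG` is the semidirect product `(ℚ × ℤ → ZMod 3) ⋊ (ℚ ⋊ ℤ)`, where `ℚ ⋊ ℤ` is the
Baumslag–Solitar group `BS(1,2)` of affine maps `x ↦ 2^n x + m`, acting on functions by
left translation.  It admits elements `A, B, T` satisfying the relations of `π` with `B ≠ 1`. -/

@[ext] structure GG where
  f : ℚ × ℤ → ZMod 3
  m : ℚ
  n : ℤ

namespace GG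

instance : Mul GG :=
  ⟨fun g h => ⟨fun p => g.f p + h.f ((p.1 - g.m) / 2 ^ g.n, p.2 - g.n),
    g.m + 2 ^ g.n * h.m, g.n + h.n⟩⟩

instance : One GG := ⟨⟨fun _ => 0, 0, 0⟩⟩

instance : Inv GG :=
  ⟨fun g => ⟨fun p => -g.f (g.m + 2 ^ g.n * p.1, g.n + p.2), -g.m / 2 ^ g.n, -g.n⟩⟩

@[simp] lemma mul_f (g h : GG) (p : ℚ × ℤ) :
    (g * h).f p = g.f p + h.f ((p.1 - g.m) / 2 ^ g.n, p.2 - g.n) := rfl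
@[simp] lemma mul_m (g h : GG) : (g * h).m = g.m + 2 ^ g.n * h.m := rfl
@[simp] lemma mul_n (g h : GG) : (g * h).n = g.n + h.n := rfl
@[simp] lemma one_f (p : ℚ × ℤ) : (1 : GG).f p = 0 := rfl
@[simp] lemma one_m : (1 : GG).m = 0 := rfl
@[simp] lemma one_n : (1 : GG).n = 0 := rfl
@[simp] lemma inv_f (g : GG) (p : ℚ × ℤ) :
    g⁻¹.f p = -g.f (g.m + 2 ^ g.n * p.1, g.n + p.2) := rfl
@[simp] lemma inv_m (g : GG) : g⁻¹.m = -g.m / 2 ^ g.n := rfl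
@[simp] lemma inv_n (g : GG) : g⁻¹.n = -g.n := rfl

lemma two_zpow_ne (n : ℤ) : (2 : ℚ) ^ n ≠ 0 := zpow_ne_zero _ two_ne_zero

instance : Group GG := by
  apply Group.ofLeftAxioms
  · intro a b c
    have key : ∀ x : ℚ, (x - 2 ^ a.n * b.m) / 2 ^ (a.n + b.n)
        = (x / 2 ^ a.n - b.m) / 2 ^ b.n := by
      intro x
      rw [zpow_add₀ (two_ne_zero) a.n b.n]
      field_simp
      try ring
    refine GG.ext (funext fun p => ?_) ?_ ?_
    · simp only [mul_f, mul_m, mul_n, key, sub_add_eq_sub_sub, add_assoc]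
    · simp only [mul_m, mul_n, zpow_add₀ (two_ne_zero : (2:ℚ) ≠ 0)]
      ring
    · simp only [mul_n, add_assoc]
  · intro a
    refine GG.ext (funext fun p => ?_) ?_ ?_ <;>
      simp
  · intro a
    have key1 : ∀ x : ℚ, (x - -a.m / 2 ^ a.n) / 2 ^ (-a.n) = a.m + 2 ^ a.n * x := by
      intro x
      rw [zpow_neg]
      field_simp [two_zpow_ne a.n]
      try ring
    have key2 : ∀ k : ℤ, k - -a.n = a.n + k := by intro k; omega
    refine GG.ext (funext fun p => ?_) ?_ ?_
    · simp only [mul_f, inv_f, inv_m, inv_n, key1, key2, one_f, neg_add_cancel]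
    · simp only [mul_m, inv_m, inv_n, one_m, zpow_neg]
      field_simp
      try simp
    · simp only [mul_n, inv_n, one_n, neg_add_cancel]

/-- The sign function on `ℚ`: `(-1)^x` for integer `x`, and `0` off `ℤ`. -/
noncomputable def χ : ℚ → ZMod 3 :=
  fun x => if Int.fract x = 0 then (if Even ⌊x⌋ then 1 else -1) else 0

lemma χ_shift (x : ℚ) : χ (x - 1) = -χ x := by
  unfold χ
  have h1 : Int.fract (x - 1) = Int.fract x := by
    simpa using Int.fract_sub_int x 1
  have h2 : ⌊x - 1⌋ = ⌊x⌋ - 1 := by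
    simpa using Int.floor_sub_int x 1
  rw [h1, h2]
  by_cases hf : Int.fract x = 0
  · rw [if_pos hf, if_pos hf]
    by_cases he : Even ⌊x⌋
    · rw [if_neg (by simp [Int.even_sub, he]), if_pos he]
    · rw [if_pos (by simpa [Int.even_sub, parity_simps] using he), if_neg he, neg_neg]
  · rw [if_neg hf, if_neg hf, neg_zero]

/-- The function part of the image of `b`: supported on the coset `⟨a⟩ ⊆ BS(1,2)`,
with alternating sign. -/
noncomputable def Bf : ℚ × ℤ → ZMod 3 := fun p => if p.2 = 0 then χ p.1 else 0

lemma Bf_shift (p : ℚ × ℤ) : Bf (p.1 - 1, p.2) = -Bf p := by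
  unfold Bf
  by_cases h : p.2 = 0
  · simp [h, χ_shift]
  · simp [h]

lemma Bf_zero : Bf (0, 0) = 1 := by
  unfold Bf χ
  norm_num

/-- Images of the generators `a, b, t`. -/
noncomputable def gen : Fin 3 → GG :=
  ![⟨fun _ => 0, 1, 0⟩, ⟨Bf, 0, 0⟩, ⟨fun _ => 0, 0, 1⟩]

@[simp] lemma gen0 : gen 0 = ⟨fun _ => 0, 1, 0⟩ := rfl
@[simp] lemma gen1 : gen 1 = ⟨Bf, 0, 0⟩ := rfl
@[simp] lemma gen2 : gen 2 = ⟨fun _ => 0, 0, 1⟩ := rfl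

lemma gen_rels : ∀ r ∈ satelliteRels, FreeGroup.lift gen r = 1 := by
  intro r hr
  rcases hr with rfl | rfl | rfl
  · -- T A T⁻¹ (A²)⁻¹ = 1
    simp only [map_mul, map_inv, map_pow, FreeGroup.lift_apply_of, gen0, gen2, pow_two]
    refine GG.ext (funext fun p => ?_) ?_ ?_ <;>
      norm_num
  · -- A B A⁻¹ B = 1
    simp only [map_mul, map_inv, FreeGroup.lift_apply_of, gen0, gen1]
    refine GG.ext (funext fun p => ?_) ?_ ?_
    · simp only [mul_f, mul_m, mul_n, inv_f, inv_m, inv_n, one_f]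
      norm_num
      rw [Bf_shift p]
      exact neg_add_cancel _
    · norm_num
    · norm_num
  · -- B³ = 1
    simp only [map_pow, FreeGroup.lift_apply_of, gen1]
    have h3 : ∀ z : ZMod 3, z + z + z = 0 := by decide
    rw [pow_succ, pow_succ, pow_one]
    refine GG.ext (funext fun p => ?_) ?_ ?_ <;>
      norm_num [h3, Prod.mk.eta]

/-- The homomorphism from `π` to the model group. -/
noncomputable def φ : PresentedGroup satelliteRels →* GG :=
  PresentedGroup.toGroup gen_rels

lemma b_ne_one : (PresentedGroup.of 1 : PresentedGroup satelliteRels) ≠ 1 := by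
  intro h
  have h2 : (PresentedGroup.toGroup gen_rels) (PresentedGroup.of (1 : Fin 3)) = 1 := by
    rw [h, map_one]
  rw [PresentedGroup.toGroup.of] at h2
  have h3 : Bf (0, 0) = (1 : GG).f (0, 0) := by
    rw [show Bf (0,0) = (gen 1).f (0,0) from rfl, h2]
  rw [Bf_zero] at h3
  exact one_ne_zero h3

end GG

section Relations

open PresentedGroup

lemma mk_rel_one {r : FreeGroup (Fin 3)} (hr : r ∈ satelliteRels) :
    PresentedGroup.mk satelliteRels r = 1 :=
  (QuotientGroup.eq_one_iff r).mpr (Subgroup.subset_normalClosure hr)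

lemma prel1 : (PresentedGroup.of 2 : PresentedGroup satelliteRels) * .of 0 * (.of 2)⁻¹ *
    ((.of 0 : PresentedGroup satelliteRels) ^ 2)⁻¹ = 1 := by
  have h := mk_rel_one (show _ ∈ satelliteRels from Set.mem_insert _ _)
  simp only [map_mul, map_inv, map_pow] at h
  exact h

lemma prel2 : (PresentedGroup.of 0 : PresentedGroup satelliteRels) * .of 1 * (.of 0)⁻¹ *
    (.of 1 : PresentedGroup satelliteRels) = 1 := by
  have h := mk_rel_one (show _ ∈ satelliteRels from
    Set.mem_insert_of_mem _ (Set.mem_insert _ _))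
  simp only [map_mul, map_inv] at h
  exact h

lemma prel3 : (PresentedGroup.of 1 : PresentedGroup satelliteRels) ^ 3 = 1 := by
  have h := mk_rel_one (show _ ∈ satelliteRels from
    Set.mem_insert_of_mem _ (Set.mem_insert_of_mem _ rfl))
  simp only [map_pow] at h
  exact h

end Relations

/-- The group `π = ⟨a, b, t | tat⁻¹ = a², aba⁻¹ = b⁻¹, b³ = 1⟩` is not virtually
torsion-free: every finite-index subgroup contains a non-identity element of finite order. -/
theorem stmt_11 (H : Subgroup (PresentedGroup satelliteRels)) (hH : H.FiniteIndex) :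
    ∃ g ∈ H, g ≠ 1 ∧ IsOfFinOrder g := by
  classical
  set b : PresentedGroup satelliteRels := PresentedGroup.of 1 with hbdef
  refine ⟨b, ?_, GG.b_ne_one, isOfFinOrder_iff_pow_eq_one.mpr ⟨3, by norm_num, prel3⟩⟩
  -- `b` lies in the normal core of `H`, because it dies in every finite quotient.
  refine Subgroup.normalCore_le H ?_
  set N := H.normalCore with hNdef
  haveI hNn : N.Normal := Subgroup.normalCore_normal H
  haveI : N.FiniteIndex := Subgroup.finiteIndex_normalCore H
  haveI : Finite (PresentedGroup satelliteRels ⧸ N) :=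
    Subgroup.finite_quotient_of_finiteIndex (H := N)
  rw [← QuotientGroup.eq_one_iff b]
  set q : PresentedGroup satelliteRels →* PresentedGroup satelliteRels ⧸ N :=
    QuotientGroup.mk' N with hqdef
  show q b = 1
  set A : PresentedGroup satelliteRels ⧸ N := q (PresentedGroup.of 0) with hA
  set B : PresentedGroup satelliteRels ⧸ N := q (PresentedGroup.of 1) with hB
  set T : PresentedGroup satelliteRels ⧸ N := q (PresentedGroup.of 2) with hT
  have r1 : T * A * T⁻¹ = A ^ 2 := by
    have := congrArg q prel1
    simp only [map_mul, map_inv, map_pow, map_one, ← hA, ← hB, ← hT] at this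
    rwa [mul_inv_eq_one] at this
  have r2 : A * B * A⁻¹ = B⁻¹ := by
    have := congrArg q prel2
    simp only [map_mul, map_inv, map_one, ← hA, ← hB] at this
    rwa [← eq_inv_iff_mul_eq_one] at this
  have r3 : B ^ 3 = 1 := by
    have := congrArg q prel3
    simpa only [map_pow, map_one, ← hB] using this
  -- The order of `A` is odd since `A` is conjugate to `A²`.
  have hord : orderOf A = orderOf (A ^ 2) := by
    refine SemiconjBy.orderOf_eq T ?_
    unfold SemiconjBy
    rw [← r1]
    group
  have hpos : 0 < orderOf A := orderOf_pos A
  have hodd : ¬ 2 ∣ orderOf A := by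
    intro hdvd
    have hg : Nat.gcd (orderOf A) 2 = 2 := Nat.gcd_eq_right hdvd
    have h2 : orderOf (A ^ 2) = orderOf A / 2 := by rw [orderOf_pow, hg]
    rw [h2] at hord
    omega
  have hAn : A ^ orderOf A = 1 := pow_orderOf_eq_one A
  -- conjugation by `A^k` sends `B` to `B^((-1)^k)`
  have conjpow : ∀ k : ℕ, A ^ k * B * (A ^ k)⁻¹ = if Even k then B else B⁻¹ := by
    intro k
    induction k with
    | zero => simp
    | succ k ih =>
      have hstep : A ^ (k + 1) * B * (A ^ (k + 1))⁻¹ = A * (A ^ k * B * (A ^ k)⁻¹) * A⁻¹ := by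
        group
      rw [hstep, ih]
      by_cases hk : Even k
      · rw [if_pos hk, if_neg (by simp [Nat.even_add_one, hk]), r2]
      · rw [if_neg hk, if_pos (Nat.even_add_one.mpr hk),
          show A * B⁻¹ * A⁻¹ = (A * B * A⁻¹)⁻¹ from by group, r2, inv_inv]
  have hBB : B = B⁻¹ := by
    have h := conjpow (orderOf A)
    rw [hAn, if_neg (fun he => hodd he.two_dvd)] at h
    simpa using h
  have hB2 : B * B = 1 := eq_inv_iff_mul_eq_one.mp hBB
  have : B = 1 := by
    have h3 : B ^ 3 = B := by rw [pow_succ, pow_two, hB2, one_mul]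
    rw [← r3, h3]
  exact this
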